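/- The derivative of P(n,p) with respect to p, evaluated at p = 1/2, equals n·C(n−1, (n−1)/2)·2^{1−n} for odd n, and this quantity is asymptotic to √(2n/π) as n → ∞. -/

import Mathlib

open Filter

noncomputable def Pmaj (n : ℕ) (p : ℝ) : ℝ :=
  ∑ i ∈ Finset.Ioc (n / 2) n, (n.choose i : ℝ) * p ^ i * (1 - p) ^ (n - i)

lemma term_hasDerivAt (n i : ℕ) (p : ℝ) :
    HasDerivAt (fun p : ℝ => (n.choose i : ℝ) * p ^ i * (1 - p) ^ (n - i))
      ((n.choose i : ℝ) * ((i : ℝ) * p ^ (i - 1)) * (1 - p) ^ (n - i)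
        + (n.choose i : ℝ) * p ^ i *
          (((n - i : ℕ) : ℝ) * (1 - p) ^ (n - i - 1) * (-1))) p := by
  have h1 : HasDerivAt (fun p : ℝ => (n.choose i : ℝ) * p ^ i)
      ((n.choose i : ℝ) * ((i : ℝ) * p ^ (i - 1))) p :=
    (hasDerivAt_pow i p).const_mul _
  have hin : HasDerivAt (fun p : ℝ => 1 - p) (-1) p := by
    simpa using (hasDerivAt_id p).const_sub 1
  have h2 : HasDerivAt (fun p : ℝ => (1 - p) ^ (n - i))
      (((n - i : ℕ) : ℝ) * (1 - p) ^ (n - i - 1) * (-1)) p := by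
    simpa [Function.comp_def] using (hasDerivAt_pow (n - i) (1 - p)).comp p hin
  exact h1.mul h2

lemma choose_mul_left (n i : ℕ) (h1 : 1 ≤ i) (h2 : i ≤ n) :
    n.choose i * i = n * (n - 1).choose (i - 1) := by
  have := Nat.add_one_mul_choose_eq (n - 1) (i - 1)
  rwa [Nat.sub_add_cancel (h1.trans h2), Nat.sub_add_cancel h1, eq_comm] at this

lemma choose_mul_right (n i : ℕ) (h : 1 ≤ n) :
    n.choose i * (n - i) = n * (n - 1).choose i := by
  rw [← Nat.choose_succ_right_eq]
  have := Nat.add_one_mul_choose_eq (n - 1) i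
  rwa [Nat.sub_add_cancel h, eq_comm] at this

/-- Key computation: the derivative at `1/2` for `n = 2m+1`. -/
lemma deriv_Pmaj_half (m : ℕ) :
    deriv (fun p => Pmaj (2 * m + 1) p) (1 / 2) =
      ((2 * m + 1 : ℕ) : ℝ) * (((2 * m).choose m : ℝ)) * (1 / 2 : ℝ) ^ (2 * m) := by
  set n := 2 * m + 1 with hn
  have hd : HasDerivAt (fun p => Pmaj n p)
      (∑ i ∈ Finset.Ioc (n / 2) n,
        ((n.choose i : ℝ) * ((i : ℝ) * (1 / 2 : ℝ) ^ (i - 1)) * (1 - 1 / 2) ^ (n - i)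
          + (n.choose i : ℝ) * (1 / 2 : ℝ) ^ i *
            (((n - i : ℕ) : ℝ) * (1 - 1 / 2 : ℝ) ^ (n - i - 1) * (-1)))) (1 / 2) := by
    unfold Pmaj
    exact HasDerivAt.fun_sum fun i _ => term_hasDerivAt n i (1 / 2)
  rw [hd.deriv]
  have hhalf : (1 - 1 / 2 : ℝ) = 1 / 2 := by norm_num
  have hn2 : n / 2 = m := by omega
  have step : ∀ i ∈ Finset.Ioc (n / 2) n,
      ((n.choose i : ℝ) * ((i : ℝ) * (1 / 2 : ℝ) ^ (i - 1)) * (1 - 1 / 2) ^ (n - i)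
          + (n.choose i : ℝ) * (1 / 2 : ℝ) ^ i *
            (((n - i : ℕ) : ℝ) * (1 - 1 / 2 : ℝ) ^ (n - i - 1) * (-1)))
        = ((n : ℝ) * ((n - 1).choose (i - 1) : ℝ) - (n : ℝ) * ((n - 1).choose i : ℝ))
            * (1 / 2 : ℝ) ^ (n - 1) := by
    intro i hi
    rw [Finset.mem_Ioc, hn2] at hi
    have h1 : 1 ≤ i := by omega
    have h2 : i ≤ n := hi.2
    have e1 : (1 / 2 : ℝ) ^ (i - 1) * (1 / 2 : ℝ) ^ (n - i) = (1 / 2 : ℝ) ^ (n - 1) := by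
      rw [← pow_add]; congr 1; omega
    have key1 : (n.choose i : ℝ) * (i : ℝ) = (n : ℝ) * ((n - 1).choose (i - 1) : ℝ) := by
      exact_mod_cast congrArg (Nat.cast : ℕ → ℝ) (choose_mul_left n i h1 h2)
    have key2 : (n.choose i : ℝ) * ((n - i : ℕ) : ℝ) = (n : ℝ) * ((n - 1).choose i : ℝ) := by
      exact_mod_cast congrArg (Nat.cast : ℕ → ℝ) (choose_mul_right n i (by omega))
    rw [hhalf]
    rcases eq_or_lt_of_le h2 with rfl | hlt
    · have hz : (n - 1).choose n = 0 := Nat.choose_eq_zero_of_lt (by omega)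
      rw [Nat.sub_self, hz, Nat.choose_self]
      simp only [Nat.cast_zero, Nat.cast_one, mul_zero, zero_mul, neg_zero, add_zero,
        pow_zero, mul_one, sub_zero, one_mul]
      rw [Nat.choose_self]
      push_cast
      ring
    · have e2 : (1 / 2 : ℝ) ^ i * (1 / 2 : ℝ) ^ (n - i - 1) = (1 / 2 : ℝ) ^ (n - 1) := by
        rw [← pow_add]; congr 1; omega
      calc (n.choose i : ℝ) * ((i : ℝ) * (1/2:ℝ) ^ (i - 1)) * (1/2:ℝ) ^ (n - i)
            + (n.choose i : ℝ) * (1/2:ℝ) ^ i *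
              (((n - i : ℕ) : ℝ) * (1/2:ℝ) ^ (n - i - 1) * (-1))
          = (n.choose i : ℝ) * (i : ℝ) * ((1/2:ℝ) ^ (i-1) * (1/2:ℝ) ^ (n-i))
            - (n.choose i : ℝ) * ((n - i : ℕ) : ℝ) * ((1/2:ℝ) ^ i * (1/2:ℝ) ^ (n-i-1)) := by
            ring
        _ = _ := by rw [e1, e2, key1, key2]; ring
  rw [Finset.sum_congr rfl step, ← Finset.sum_mul]
  have hIoc : Finset.Ioc (n / 2) n = Finset.Ico (m + 1) (n + 1) := by
    ext x; simp [hn2]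
  rw [hIoc, Finset.sum_Ico_eq_sum_range]
  have hcard : n + 1 - (m + 1) = m + 1 := by omega
  rw [hcard]
  have : ∀ k ∈ Finset.range (m + 1),
      ((n : ℝ) * ((n - 1).choose (m + 1 + k - 1) : ℝ) - (n : ℝ) * ((n - 1).choose (m + 1 + k) : ℝ))
        = ((fun j => (n : ℝ) * ((n - 1).choose (m + j) : ℝ)) k
            - (fun j => (n : ℝ) * ((n - 1).choose (m + j) : ℝ)) (k + 1)) := by
    intro k _
    have e1 : m + 1 + k - 1 = m + k := by omega
    have e2 : m + 1 + k = m + (k + 1) := by omega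
    simp only
    rw [e1, e2]
  rw [Finset.sum_congr rfl this, Finset.sum_range_sub']
  have hz : (n - 1).choose (m + (m + 1)) = 0 := by
    apply Nat.choose_eq_zero_of_lt; omega
  have hn1 : n - 1 = 2 * m := by omega
  rw [hz, hn1]
  simp only [Nat.cast_zero, mul_zero, sub_zero, add_zero]

open Stirling in
lemma stirling_central (k : ℕ) (hk : 1 ≤ k) :
    ((2 * k).choose k : ℝ) * Real.sqrt k / 4 ^ k =
      stirlingSeq (2 * k) / stirlingSeq k ^ 2 := by
  have hkr : (0 : ℝ) < (k : ℝ) := by exact_mod_cast hk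
  have he : (0 : ℝ) < Real.exp 1 := Real.exp_pos 1
  have hsk : (0 : ℝ) < Real.sqrt k := Real.sqrt_pos.mpr hkr
  have hfact : ((2 * k).factorial : ℝ) = ((2 * k).choose k : ℝ) * (k.factorial : ℝ) * (k.factorial : ℝ) := by
    have := Nat.choose_mul_factorial_mul_factorial (Nat.le_mul_of_pos_left k two_pos)
    have h2 : 2 * k - k = k := by omega
    rw [h2] at this
    exact_mod_cast (congrArg (Nat.cast : ℕ → ℝ) this).symm
  have hsqrt4 : Real.sqrt (2 * (2 * k : ℕ)) = 2 * Real.sqrt k := by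
    have : (2 * (2 * k : ℕ) : ℝ) = 4 * (k : ℝ) := by push_cast; ring
    rw [this, show (4 : ℝ) = 2 ^ 2 by norm_num, Real.sqrt_mul (by positivity),
      Real.sqrt_sq (by norm_num)]
  have hsqrt2 : Real.sqrt (2 * k) ^ 2 = 2 * (k : ℝ) := by
    rw [Real.sq_sqrt (by positivity)]
  have hpow : (((2 * k : ℕ) : ℝ) / Real.exp 1) ^ (2 * k)
      = 2 ^ (2 * k) * ((k : ℝ) / Real.exp 1) ^ (2 * k) := by
    rw [← mul_pow]
    congr 1
    push_cast
    field_simp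
  rw [stirlingSeq, stirlingSeq]
  have hXpos : (0:ℝ) < Real.sqrt (2 * (k:ℝ)) := Real.sqrt_pos.mpr (by positivity)
  have hfne : (k.factorial : ℝ) ≠ 0 := by exact_mod_cast (Nat.factorial_pos k).ne'
  have hX2 : Real.sqrt (2 * (k:ℝ)) * Real.sqrt (2 * (k:ℝ)) = 2 * (k:ℝ) :=
    Real.mul_self_sqrt (by positivity)
  have hkk : Real.sqrt k * Real.sqrt k = (k : ℝ) := Real.mul_self_sqrt (by positivity)
  have h4 : (4 : ℝ) ^ k = 2 ^ (2 * k) := by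
    rw [show (4:ℝ) = 2^2 by norm_num, ← pow_mul]
  have hppos : (0:ℝ) < ((k : ℝ) / Real.exp 1) ^ k := by positivity
  have hpsq : (((k : ℝ) / Real.exp 1) ^ k) ^ 2 = ((k : ℝ) / Real.exp 1) ^ (2 * k) := by
    rw [← pow_mul, mul_comm]
  rw [hsqrt4, hpow, hfact, h4]
  field_simp
  ring_nf
  have hexp : Real.exp ((k:ℝ)) ^ 2 = Real.exp ((k:ℝ) * 2) := by
    rw [sq, ← Real.exp_add]; ring_nf
  have hs2 : (Real.sqrt 2) ^ 2 = (2:ℝ) := Real.sq_sqrt (by norm_num)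
  rw [Real.sq_sqrt hkr.le, Real.sq_sqrt (by positivity)]
  ring

open Stirling in
lemma tendsto_central :
    Tendsto (fun k : ℕ => ((2 * k).choose k : ℝ) * Real.sqrt k / 4 ^ k) atTop
      (nhds (Real.sqrt Real.pi)⁻¹) := by
  have hπ : (0 : ℝ) < Real.sqrt Real.pi := Real.sqrt_pos.mpr Real.pi_pos
  have h2k : Tendsto (fun k : ℕ => 2 * k) atTop atTop :=
    tendsto_atTop_mono (fun k => by simp only [id_eq]; omega) tendsto_id
  have hA : Tendsto (fun k : ℕ => stirlingSeq (2 * k)) atTop (nhds (Real.sqrt Real.pi)) :=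
    tendsto_stirlingSeq_sqrt_pi.comp h2k
  have hB : Tendsto (fun k : ℕ => stirlingSeq k ^ 2) atTop (nhds (Real.sqrt Real.pi ^ 2)) :=
    tendsto_stirlingSeq_sqrt_pi.pow 2
  have hlim : Real.sqrt Real.pi / Real.sqrt Real.pi ^ 2 = (Real.sqrt Real.pi)⁻¹ := by
    rw [sq]; field_simp
  refine Tendsto.congr' ?_ (hlim ▸ hA.div hB (by positivity))
  filter_upwards [eventually_ge_atTop 1] with k hk
  exact (stirling_central k hk).symm

lemma aux_sqrt_eq (k : ℕ) (hk : 1 ≤ k) :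
    ((2 * (k : ℝ) + 1)) / Real.sqrt (2 * (2 * (k : ℝ) + 1) / Real.pi) =
      Real.sqrt k * Real.sqrt (Real.pi * (2 * (k : ℝ) + 1) / (2 * (k : ℝ))) := by
  have hkr : (0 : ℝ) < (k : ℝ) := by exact_mod_cast hk
  have hπ := Real.pi_pos
  have h1 : (0 : ℝ) < 2 * (k : ℝ) + 1 := by positivity
  rw [← Real.sqrt_sq h1.le, ← Real.sqrt_div (sq_nonneg _),
    ← Real.sqrt_mul hkr.le]
  congr 1
  field_simp
  ring_nf
  rw [Real.sq_sqrt (by positivity)]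

theorem Pmaj_deriv_at_half :
    (∀ n : ℕ, Odd n →
      deriv (fun p => Pmaj n p) (1 / 2) =
        (n : ℝ) * ((n - 1).choose ((n - 1) / 2) : ℝ) * (2 : ℝ) ^ (1 - (n : ℤ))) ∧
    Tendsto (fun k : ℕ =>
        deriv (fun p => Pmaj (2 * k + 1) p) (1 / 2) /
          Real.sqrt (2 * (2 * k + 1) / Real.pi)) atTop (nhds 1) := by
  constructor
  · rintro n ⟨m, rfl⟩
    rw [deriv_Pmaj_half m]
    have h1 : (2 * m + 1 - 1 : ℕ) = 2 * m := by omega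
    have h2 : (2 * m) / 2 = m := by omega
    rw [h1, h2]
    have h3 : (2 : ℝ) ^ (1 - ((2 * m + 1 : ℕ) : ℤ)) = (1 / 2 : ℝ) ^ (2 * m) := by
      have : (1 - ((2 * m + 1 : ℕ) : ℤ)) = -(2 * m : ℕ) := by push_cast; ring
      rw [this, zpow_neg, zpow_natCast, ← inv_pow]
      norm_num
    rw [h3]
  · have hπ : (0 : ℝ) < Real.sqrt Real.pi := Real.sqrt_pos.mpr Real.pi_pos
    have hB : Tendsto (fun k : ℕ => Real.sqrt (Real.pi * (2 * (k : ℝ) + 1) / (2 * (k : ℝ))))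
        atTop (nhds (Real.sqrt Real.pi)) := by
      have hinner : Tendsto (fun k : ℕ => Real.pi * (2 * (k : ℝ) + 1) / (2 * (k : ℝ)))
          atTop (nhds Real.pi) := by
        have h0 : Tendsto (fun k : ℕ => 1 / (2 * (k : ℝ))) atTop (nhds 0) := by
          apply Tendsto.div_atTop tendsto_const_nhds
          exact Tendsto.const_mul_atTop two_pos tendsto_natCast_atTop_atTop
        have h1 : Tendsto (fun k : ℕ => Real.pi * (1 + 1 / (2 * (k : ℝ)))) atTop
            (nhds (Real.pi * (1 + 0))) :=
          ((tendsto_const_nhds : Tendsto (fun _ : ℕ => (1:ℝ)) atTop (nhds 1)).add h0).const_mul Real.pi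
        simp only [add_zero, mul_one] at h1
        refine h1.congr' ?_
        filter_upwards [eventually_ge_atTop 1] with k hk
        have hkr : (0 : ℝ) < (k : ℝ) := by exact_mod_cast hk
        field_simp
      exact (Real.continuous_sqrt.tendsto _).comp hinner
    have hmain := tendsto_central.mul hB
    rw [inv_mul_cancel₀ hπ.ne'] at hmain
    refine Tendsto.congr' ?_ hmain
    filter_upwards [eventually_ge_atTop 1] with k hk
    have hkr : (0 : ℝ) < (k : ℝ) := by exact_mod_cast hk
    have hs : (0 : ℝ) < Real.sqrt (2 * (2 * (k : ℝ) + 1) / Real.pi) := by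
      have := Real.pi_pos; positivity
    rw [deriv_Pmaj_half k]
    have hcast : ((2 * k + 1 : ℕ) : ℝ) = 2 * (k : ℝ) + 1 := by push_cast; ring
    rw [hcast]
    have hhalf : (1 / 2 : ℝ) ^ (2 * k) = ((4 : ℝ) ^ k)⁻¹ := by
      rw [div_pow, one_pow, show (4 : ℝ) ^ k = 2 ^ (2 * k) from by
        rw [show (4:ℝ) = 2 ^ 2 by norm_num, ← pow_mul], one_div]
    rw [hhalf]
    have key := aux_sqrt_eq k hk
    rw [show (2 * (k:ℝ) + 1) * ((2 * k).choose k : ℝ) * ((4:ℝ) ^ k)⁻¹ /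
          Real.sqrt (2 * (2 * (k:ℝ) + 1) / Real.pi)
        = ((2 * k).choose k : ℝ) * ((4:ℝ) ^ k)⁻¹ *
          ((2 * (k:ℝ) + 1) / Real.sqrt (2 * (2 * (k:ℝ) + 1) / Real.pi)) from by ring, key]
    ring
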